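/- arXiv:2205.04989 — 4 statements merged into one kernel-verified Lean document; each statement's English description precedes it below -/
import Mathlib

section
/- Let G = (V,E) be a finite simple graph with vertices v_1,...,v_n, and let F = {f_1,...,f_n} be features indexed by V. Define the demonstration state s_i ⊆ F as the set of features corresponding to the closed neighborhood of v_i. Suppose p is a set of at most k transitions, each of the form ({f_j}, a) for a single fixed action a, such that for every i, some transition's feature set is contained in s_i. Then {v_j : ({f_j}, a) ∈ p} is a dominating set of G of size at most k. -/
theorem stmt_7 {V A : Type} [Fintype V] [DecidableEq V] [DecidableEq A]
    (G : SimpleGraph V) [DecidableRel G.Adj] (k : ℕ) (a : A)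
    (p : Finset (Finset V × A)) (hcard : p.card ≤ k)
    (hform : ∀ tr ∈ p, ∃ j : V, tr = (({j} : Finset V), a))
    (hcover : ∀ i : V, ∃ tr ∈ p, tr.1 ⊆ insert i (G.neighborFinset i)) :
    (Finset.univ.filter (fun j : V => (({j} : Finset V), a) ∈ p)).card ≤ k ∧
    ∀ v : V, v ∈ Finset.univ.filter (fun j : V => (({j} : Finset V), a) ∈ p) ∨
      ∃ u ∈ Finset.univ.filter (fun j : V => (({j} : Finset V), a) ∈ p), G.Adj u v := by
  constructor
  · refine le_trans (Finset.card_le_card_of_injOn (fun j => (({j} : Finset V), a))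
      (fun j hj => (Finset.mem_filter.mp hj).2) ?_) hcard
    intro x _ y _ h
    have := congrArg Prod.fst h
    simpa using this
  · intro v
    obtain ⟨tr, htr, hsub⟩ := hcover v
    obtain ⟨j, rfl⟩ := hform tr htr
    have hj : j ∈ insert v (G.neighborFinset v) := hsub (by simp)
    rcases Finset.mem_insert.mp hj with h | h
    · left; subst h; simp [htr]
    · right
      exact ⟨j, Finset.mem_filter.mpr ⟨Finset.mem_univ _, htr⟩,
        (G.mem_neighborFinset v j).mp h |>.symm⟩
end

section
/- Let G = (V,E) be a finite simple graph with a dominating set V' of size l ≤ k, and let the states s_1,...,s_n ⊆ F be the closed neighborhoods of the vertices of G (as feature sets). Then the policy p consisting of the transitions ({f}, a) for each feature f corresponding to a vertex of V' (a single fixed action a) has at most k transitions, every transition feature-set has size 1, for every state s_i at least one transition of p triggers on s_i, and all transitions that trigger on any s_i produce the same action. -/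
theorem stmt_8 {V A : Type} [Fintype V] [DecidableEq V] [DecidableEq A]
    (G : SimpleGraph V) [DecidableRel G.Adj] (k l : ℕ) (a : A)
    (D : Finset V) (hDcard : D.card = l) (hlk : l ≤ k)
    (hdom : ∀ v : V, v ∈ D ∨ ∃ u ∈ D, G.Adj u v) :
    let p : Finset (Finset V × A) := D.image (fun v => (({v} : Finset V), a))
    p.card ≤ k ∧
    (∀ tr ∈ p, tr.1.card = 1) ∧
    (∀ i : V, ∃ tr ∈ p, tr.1 ⊆ insert i (G.neighborFinset i)) ∧
    (∀ i : V, ∀ tr ∈ p, ∀ tr' ∈ p,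
      tr.1 ⊆ insert i (G.neighborFinset i) → tr'.1 ⊆ insert i (G.neighborFinset i) →
        tr.2 = tr'.2) := by
  intro p
  refine ⟨?_, ?_, ?_, ?_⟩
  · calc p.card ≤ D.card := Finset.card_image_le
      _ ≤ k := by omega
  · intro tr htr
    obtain ⟨v, _, rfl⟩ := Finset.mem_image.mp htr
    simp
  · intro i
    rcases hdom i with h | ⟨u, hu, hadj⟩
    · exact ⟨({i}, a), Finset.mem_image_of_mem _ h, by simp⟩
    · exact ⟨({u}, a), Finset.mem_image_of_mem _ hu, by
        simp [Finset.singleton_subset_iff, G.mem_neighborFinset, hadj.symm]⟩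
  · intro i tr htr tr' htr' _ _
    obtain ⟨v, _, rfl⟩ := Finset.mem_image.mp htr
    obtain ⟨v', _, rfl⟩ := Finset.mem_image.mp htr'
    rfl
end

section
/- Let G = (V,E) be a finite simple graph, F = {f_1,...,f_n, f_x}, and let states s_i = {f_x} ∪ N_C(v_i) (as feature sets) with a single action a. Then G has a dominating set of size at most k if and only if there exists a set p' of at most k transitions, each triggered by a single feature taken from {f_1,...,f_n} (not f_x), producing action a, such that every s_i triggers at least one transition of p' and no transition of p' triggers on the state {f_x}. -/
/-- Correctness of the reduction from Dominating Set to incremental LfD with history,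
negative new demonstration. Features are vertices (`Sum.inl v`) plus `f_x = Sum.inr ()`;
there is a single action, so transitions are identified with their triggering
feature-sets. States are `s i = {f_x} ∪ closedNeighborhood i`. -/
theorem stmt_10 {V : Type} [Fintype V] [DecidableEq V]
    (G : SimpleGraph V) [DecidableRel G.Adj] (k : ℕ)
    (s : V → Finset (V ⊕ Unit))
    (hs : ∀ i : V, s i =
      insert (Sum.inr ()) ((insert i (G.neighborFinset i)).image Sum.inl)) :
    (∃ D : Finset V, D.card ≤ k ∧ ∀ v : V, v ∈ D ∨ ∃ u ∈ D, G.Adj u v) ↔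
    (∃ p' : Finset (Finset (V ⊕ Unit)), p'.card ≤ k ∧
      (∀ tr ∈ p', ∃ v : V, tr = ({Sum.inl v} : Finset (V ⊕ Unit))) ∧
      (∀ i : V, ∃ tr ∈ p', tr ⊆ s i) ∧
      (∀ tr ∈ p', ¬ tr ⊆ ({Sum.inr ()} : Finset (V ⊕ Unit)))) := by
  constructor
  · rintro ⟨D, hk, hdom⟩
    refine ⟨D.image (fun v => ({Sum.inl v} : Finset (V ⊕ Unit))), ?_, ?_, ?_, ?_⟩
    · exact le_trans Finset.card_image_le hk
    · intro tr htr
      obtain ⟨v, _, rfl⟩ := Finset.mem_image.mp htr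
      exact ⟨v, rfl⟩
    · intro i
      rcases hdom i with hi | ⟨u, hu, hadj⟩
      · refine ⟨{Sum.inl i}, Finset.mem_image_of_mem _ hi, ?_⟩
        intro x hx
        rw [Finset.mem_singleton] at hx
        subst hx
        rw [hs i]
        exact Finset.mem_insert_of_mem (Finset.mem_image_of_mem _ (Finset.mem_insert_self _ _))
      · refine ⟨{Sum.inl u}, Finset.mem_image_of_mem _ hu, ?_⟩
        intro x hx
        rw [Finset.mem_singleton] at hx
        subst hx
        rw [hs i]
        exact Finset.mem_insert_of_mem (Finset.mem_image_of_mem _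
          (Finset.mem_insert_of_mem ((SimpleGraph.mem_neighborFinset G i u).mpr hadj.symm)))
    · intro tr htr hsub
      obtain ⟨v, _, rfl⟩ := Finset.mem_image.mp htr
      have := hsub (Finset.mem_singleton_self _)
      simp at this
  · rintro ⟨p', hk, hsing, hcov, -⟩
    refine ⟨Finset.univ.filter (fun v => ({Sum.inl v} : Finset (V ⊕ Unit)) ∈ p'), ?_, ?_⟩
    · calc (Finset.univ.filter (fun v => ({Sum.inl v} : Finset (V ⊕ Unit)) ∈ p')).card
          ≤ p'.card := Finset.card_le_card_of_injOn
            (fun v => ({Sum.inl v} : Finset (V ⊕ Unit)))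
            (fun v hv => (Finset.mem_filter.mp hv).2)
            (fun a _ b _ h => by simpa using h)
        _ ≤ k := hk
    · intro i
      obtain ⟨tr, htr, hsub⟩ := hcov i
      obtain ⟨v, rfl⟩ := hsing tr htr
      have hmem : (Sum.inl v : V ⊕ Unit) ∈ s i := hsub (Finset.mem_singleton_self _)
      rw [hs i] at hmem
      simp only [Finset.mem_insert, Finset.mem_image] at hmem
      rcases hmem with h | ⟨w, hw, hweq⟩
      · exact absurd h (by simp)
      · have hwv : w = v := Sum.inl.inj hweq
        have hvD : v ∈ Finset.univ.filter (fun v => ({Sum.inl v} : Finset (V ⊕ Unit)) ∈ p') :=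
          Finset.mem_filter.mpr ⟨Finset.mem_univ _, htr⟩
        rw [hwv] at hw
        rcases hw with h | h
        · exact Or.inl (h ▸ hvD)
        · exact Or.inr ⟨v, hvD, ((SimpleGraph.mem_neighborFinset G i v).mp h).symm⟩
end

section
/- Let G = (V,E) be a finite simple graph with features F = {f_1,...,f_n, f_x}, a single action a, and a policy p with |V|+1 transitions whose i-th transition (1 ≤ i ≤ |V|) is triggered by the feature set of the closed neighborhood of v_i. Suppose p' is a set of at most k+1 transitions, each triggered by a single feature, producing action a, such that (i) some transition of p' triggers on the state {f_x}, and (ii) for every i, some transition of p' triggers on the closed-neighborhood state of v_i. Since f_x does not occur in any closed-neighborhood state, the transition triggering on {f_x} must be ({f_x}, a), and the features of the other at most k transitions correspond to a dominating set of G of size at most k. -/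
/-- Backward direction of the reduction from Dominating Set to incremental LfD without
history, positive new demonstration. Features are vertices (`Sum.inl v`) plus the fresh
feature `f_x = Sum.inr ()`; there is a single action, so transitions are identified with
their triggering feature-sets. The closed-neighborhood state of `v_i` is
`(closedNeighborhood i).image Sum.inl`, which does not contain `f_x`. -/
theorem stmt_13 {V : Type} [Fintype V] [DecidableEq V]
    (G : SimpleGraph V) [DecidableRel G.Adj] (k : ℕ)
    (s : V → Finset (V ⊕ Unit))
    (hs : ∀ i : V, s i = (insert i (G.neighborFinset i)).image Sum.inl)
    (p' : Finset (Finset (V ⊕ Unit)))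
    (hcard : p'.card ≤ k + 1)
    (hsing : ∀ tr ∈ p', ∃ f : V ⊕ Unit, tr = ({f} : Finset (V ⊕ Unit)))
    (hnew : ∃ tr ∈ p', tr ⊆ ({Sum.inr ()} : Finset (V ⊕ Unit)))
    (hcover : ∀ i : V, ∃ tr ∈ p', tr ⊆ s i) :
    (∀ tr ∈ p', tr ⊆ ({Sum.inr ()} : Finset (V ⊕ Unit)) →
      tr = ({Sum.inr ()} : Finset (V ⊕ Unit))) ∧
    (Finset.univ.filter (fun v : V =>
        ({Sum.inl v} : Finset (V ⊕ Unit)) ∈ p')).card ≤ k ∧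
    ∀ v : V, v ∈ Finset.univ.filter (fun v : V =>
        ({Sum.inl v} : Finset (V ⊕ Unit)) ∈ p') ∨
      ∃ u ∈ Finset.univ.filter (fun v : V =>
        ({Sum.inl v} : Finset (V ⊕ Unit)) ∈ p'), G.Adj u v := by

  have hpart1 : ∀ tr ∈ p', tr ⊆ ({Sum.inr ()} : Finset (V ⊕ Unit)) →
      tr = ({Sum.inr ()} : Finset (V ⊕ Unit)) := by
    intro tr htr hsub
    obtain ⟨f, rfl⟩ := hsing tr htr
    have := hsub (Finset.mem_singleton_self f)
    simp only [Finset.mem_singleton] at this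
    rw [this]
  refine ⟨hpart1, ?_, ?_⟩
  · -- cardinality bound
    obtain ⟨tr0, htr0, hsub0⟩ := hnew
    have htr0' : tr0 = ({Sum.inr ()} : Finset (V ⊕ Unit)) := hpart1 tr0 htr0 hsub0
    subst htr0'
    have hinj : (Finset.univ.filter (fun v : V =>
        ({Sum.inl v} : Finset (V ⊕ Unit)) ∈ p')).card ≤
        (p'.erase ({Sum.inr ()} : Finset (V ⊕ Unit))).card := by
      apply Finset.card_le_card_of_injOn (fun v => ({Sum.inl v} : Finset (V ⊕ Unit)))
      · intro v hv
        simp only [Finset.mem_coe, Finset.mem_filter] at hv ⊢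
        refine Finset.mem_erase.2 ⟨?_, hv.2⟩
        intro h
        have := Finset.singleton_injective h
        exact Sum.inl_ne_inr this
      · intro a _ b _ hab
        have := Finset.singleton_injective hab
        exact Sum.inl_injective this
    have : (p'.erase ({Sum.inr ()} : Finset (V ⊕ Unit))).card = p'.card - 1 :=
      Finset.card_erase_of_mem htr0
    omega
  · intro v
    obtain ⟨tr, htr, hsub⟩ := hcover v
    obtain ⟨f, rfl⟩ := hsing tr htr
    have hf := hsub (Finset.mem_singleton_self f)
    rw [hs v] at hf
    simp only [Finset.mem_image, Finset.mem_insert, SimpleGraph.mem_neighborFinset] at hf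
    obtain ⟨u, hu, rfl⟩ := hf
    rcases hu with rfl | hadj
    · left; simp only [Finset.mem_filter, Finset.mem_univ, true_and]; exact htr
    · right
      exact ⟨u, by simp only [Finset.mem_filter, Finset.mem_univ, true_and]; exact htr,
        hadj.symm⟩
end
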